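/- Let q, q', ℓ be nonzero complex numbers and let Ã_{q,q',ℓ} be the q-linked algebra WITHOUT the determinant relations. Then the chiral quantum determinant det = ad − q⁻¹bc and the antichiral quantum determinant det' = a'd' − q'b'c' are both central in Ã_{q,q',ℓ}; in particular det·det' = det'·det. -/

import Mathlib

noncomputable section

open FreeAlgebra

/-- The relations of the q-linked algebra (without the determinant relations):
generators `a = ι ℂ 0, b = ι ℂ 1, c = ι ℂ 2, d = ι ℂ 3` (chiral sector, Manin
relations with parameter `q`), `a' = ι ℂ 4, b' = ι ℂ 5, c' = ι ℂ 6, d' = ι ℂ 7`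
(antichiral sector, Manin relations with parameter `1/q'`), the link relations and
the commutation relations between the two sectors. -/
inductive LinkedRel (q q' ℓ : ℂ) :
    FreeAlgebra ℂ (Fin 8) → FreeAlgebra ℂ (Fin 8) → Prop
  | ab : LinkedRel q q' ℓ (ι ℂ 0 * ι ℂ 1) (q⁻¹ • (ι ℂ 1 * ι ℂ 0))
  | ac : LinkedRel q q' ℓ (ι ℂ 0 * ι ℂ 2) (q⁻¹ • (ι ℂ 2 * ι ℂ 0))
  | bd : LinkedRel q q' ℓ (ι ℂ 1 * ι ℂ 3) (q⁻¹ • (ι ℂ 3 * ι ℂ 1))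
  | cd : LinkedRel q q' ℓ (ι ℂ 2 * ι ℂ 3) (q⁻¹ • (ι ℂ 3 * ι ℂ 2))
  | bc : LinkedRel q q' ℓ (ι ℂ 1 * ι ℂ 2) (ι ℂ 2 * ι ℂ 1)
  | ad : LinkedRel q q' ℓ (ι ℂ 0 * ι ℂ 3 - ι ℂ 3 * ι ℂ 0) ((q⁻¹ - q) • (ι ℂ 1 * ι ℂ 2))
  | ab' : LinkedRel q q' ℓ (ι ℂ 4 * ι ℂ 5) (q' • (ι ℂ 5 * ι ℂ 4))
  | ac' : LinkedRel q q' ℓ (ι ℂ 4 * ι ℂ 6) (q' • (ι ℂ 6 * ι ℂ 4))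
  | bd' : LinkedRel q q' ℓ (ι ℂ 5 * ι ℂ 7) (q' • (ι ℂ 7 * ι ℂ 5))
  | cd' : LinkedRel q q' ℓ (ι ℂ 6 * ι ℂ 7) (q' • (ι ℂ 7 * ι ℂ 6))
  | bc' : LinkedRel q q' ℓ (ι ℂ 5 * ι ℂ 6) (ι ℂ 6 * ι ℂ 5)
  | ad' : LinkedRel q q' ℓ (ι ℂ 4 * ι ℂ 7 - ι ℂ 7 * ι ℂ 4) ((q' - q'⁻¹) • (ι ℂ 5 * ι ℂ 6))
  | link₁ : LinkedRel q q' ℓ (ι ℂ 5 * ι ℂ 0) (ℓ • (ι ℂ 0 * ι ℂ 5))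
  | link₂ : LinkedRel q q' ℓ (ι ℂ 0 * ι ℂ 6) (ℓ • (ι ℂ 6 * ι ℂ 0))
  | link₃ : LinkedRel q q' ℓ (ι ℂ 4 * ι ℂ 1) (ℓ • (ι ℂ 1 * ι ℂ 4))
  | link₄ : LinkedRel q q' ℓ (ι ℂ 1 * ι ℂ 7) (ℓ • (ι ℂ 7 * ι ℂ 1))
  | link₅ : LinkedRel q q' ℓ (ι ℂ 2 * ι ℂ 4) (ℓ • (ι ℂ 4 * ι ℂ 2))
  | link₆ : LinkedRel q q' ℓ (ι ℂ 7 * ι ℂ 2) (ℓ • (ι ℂ 2 * ι ℂ 7))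
  | link₇ : LinkedRel q q' ℓ (ι ℂ 3 * ι ℂ 5) (ℓ • (ι ℂ 5 * ι ℂ 3))
  | link₈ : LinkedRel q q' ℓ (ι ℂ 6 * ι ℂ 3) (ℓ • (ι ℂ 3 * ι ℂ 6))
  | comm₁ : LinkedRel q q' ℓ (ι ℂ 0 * ι ℂ 4) (ι ℂ 4 * ι ℂ 0)
  | comm₂ : LinkedRel q q' ℓ (ι ℂ 0 * ι ℂ 7) (ι ℂ 7 * ι ℂ 0)
  | comm₃ : LinkedRel q q' ℓ (ι ℂ 1 * ι ℂ 5) (ι ℂ 5 * ι ℂ 1)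
  | comm₄ : LinkedRel q q' ℓ (ι ℂ 1 * ι ℂ 6) (ι ℂ 6 * ι ℂ 1)
  | comm₅ : LinkedRel q q' ℓ (ι ℂ 2 * ι ℂ 5) (ι ℂ 5 * ι ℂ 2)
  | comm₆ : LinkedRel q q' ℓ (ι ℂ 2 * ι ℂ 6) (ι ℂ 6 * ι ℂ 2)
  | comm₇ : LinkedRel q q' ℓ (ι ℂ 3 * ι ℂ 4) (ι ℂ 4 * ι ℂ 3)
  | comm₈ : LinkedRel q q' ℓ (ι ℂ 3 * ι ℂ 7) (ι ℂ 7 * ι ℂ 3)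

/-- The q-linked algebra `Ã_{q,q',ℓ}` without the determinant relations. -/
abbrev Atilde (q q' ℓ : ℂ) := RingQuot (LinkedRel q q' ℓ)

/-- The images of the eight generators. -/
def gen (q q' ℓ : ℂ) (i : Fin 8) : Atilde q q' ℓ :=
  RingQuot.mkAlgHom ℂ (LinkedRel q q' ℓ) (ι ℂ i)

section Helpers

variable {R : Type*} [Ring R] [Algebra ℂ R]

private lemma swapA {x y : R} {s : ℂ} (h : x * y = s • (y * x)) (t : R) :
    x * (y * t) = s • (y * (x * t)) := by
  rw [← mul_assoc, h, smul_mul_assoc, mul_assoc]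

private lemma swap1 {x y : R} (h : x * y = y * x) (t : R) :
    x * (y * t) = y * (x * t) := by
  rw [← mul_assoc, h, mul_assoc]

private lemma inv_swap {x y : R} {s : ℂ} (hs : s ≠ 0) (h : x * y = s • (y * x)) :
    y * x = s⁻¹ • (x * y) := by
  rw [h, smul_smul, inv_mul_cancel₀ hs, one_smul]

private lemma manin_central (q : ℂ) (hq : q ≠ 0) (a b c d : R)
    (hab : a * b = q⁻¹ • (b * a)) (hac : a * c = q⁻¹ • (c * a))
    (hbd : b * d = q⁻¹ • (d * b)) (hcd : c * d = q⁻¹ • (d * c))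
    (hbc : b * c = c * b)
    (had : a * d - d * a = (q⁻¹ - q) • (b * c)) :
    ((a * d - q⁻¹ • (b * c)) * a = a * (a * d - q⁻¹ • (b * c))) ∧
    ((a * d - q⁻¹ • (b * c)) * b = b * (a * d - q⁻¹ • (b * c))) ∧
    ((a * d - q⁻¹ • (b * c)) * c = c * (a * d - q⁻¹ • (b * c))) ∧
    ((a * d - q⁻¹ • (b * c)) * d = d * (a * d - q⁻¹ • (b * c))) := by
  have hq1 : q⁻¹ ≠ 0 := inv_ne_zero hq
  have hba : b * a = q • (a * b) := by simpa using inv_swap hq1 hab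
  have hca : c * a = q • (a * c) := by simpa using inv_swap hq1 hac
  have hdb : d * b = q • (b * d) := by simpa using inv_swap hq1 hbd
  have hdc : d * c = q • (c * d) := by simpa using inv_swap hq1 hcd
  have hda : d * a = a * d - (q⁻¹ - q) • (b * c) := by rw [← had]; abel
  have haD : a * d = d * a + (q⁻¹ - q) • (b * c) := by rw [← had]; abel
  have key : ∀ t : R, a * (d * t) = d * (a * t) + (q⁻¹ - q) • (b * (c * t)) := by
    intro t
    rw [← mul_assoc, haD, add_mul, smul_mul_assoc, mul_assoc, mul_assoc]
  refine ⟨?_, ?_, ?_, ?_⟩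
  · simp only [sub_mul, mul_sub, smul_mul_assoc, mul_smul_comm, mul_assoc]
    rw [hda, hca]
    simp only [mul_sub, mul_smul_comm, smul_sub, smul_smul, swapA hba c]
    match_scalars <;> field_simp <;> ring
  · simp only [sub_mul, mul_sub, smul_mul_assoc, mul_smul_comm, mul_assoc]
    rw [hdb, ← hbc]
    simp only [mul_smul_comm, smul_smul, swapA hab d]
    match_scalars <;> field_simp
  · simp only [sub_mul, mul_sub, smul_mul_assoc, mul_smul_comm, mul_assoc]
    rw [hdc, swap1 hbc c]
    simp only [mul_smul_comm, smul_smul, swapA hac d]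
    match_scalars <;> field_simp
  · simp only [sub_mul, mul_sub, smul_mul_assoc, mul_smul_comm, mul_assoc]
    rw [key d, hcd]
    simp only [mul_smul_comm, smul_smul, smul_add, swapA hbd c]
    match_scalars <;> field_simp <;> ring

private lemma cross_central (a b c d x : R) (s α β γ δ : ℂ)
    (hαδ : α * δ = 1) (hβγ : β * γ = 1)
    (ha : a * x = α • (x * a)) (hb : b * x = β • (x * b))
    (hc : c * x = γ • (x * c)) (hd : d * x = δ • (x * d)) :
    (a * d - s • (b * c)) * x = x * (a * d - s • (b * c)) := by
  have h1 : a * (d * x) = (α * δ) • (x * (a * d)) := by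
    rw [hd, mul_smul_comm, swapA ha d, smul_smul, mul_comm δ α]
  have h2 : b * (c * x) = (β * γ) • (x * (b * c)) := by
    rw [hc, mul_smul_comm, swapA hb c, smul_smul, mul_comm γ β]
  simp only [sub_mul, mul_sub, smul_mul_assoc, mul_smul_comm, mul_assoc, h1, h2,
    hαδ, hβγ, one_smul]

end Helpers

/-- The chiral quantum determinant `det = a d − q⁻¹ b c` and the antichiral quantum
determinant `det' = a' d' − q' b' c'` are central in `Ã_{q,q',ℓ}`; in particular
they commute with each other. -/
theorem determinants_central (q q' ℓ : ℂ) (hq : q ≠ 0) (hq' : q' ≠ 0) (hℓ : ℓ ≠ 0) :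
    let g := gen q q' ℓ
    let Det := g 0 * g 3 - q⁻¹ • (g 1 * g 2)
    let Det' := g 4 * g 7 - q' • (g 5 * g 6)
    (∀ i : Fin 8, Det * g i = g i * Det) ∧
    (∀ i : Fin 8, Det' * g i = g i * Det') ∧
    Det * Det' = Det' * Det := by
  intro g Det Det'
  have rel : ∀ {x y : FreeAlgebra ℂ (Fin 8)}, LinkedRel q q' ℓ x y →
      RingQuot.mkAlgHom ℂ (LinkedRel q q' ℓ) x = RingQuot.mkAlgHom ℂ (LinkedRel q q' ℓ) y :=
    fun h => RingQuot.mkAlgHom_rel ℂ h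
  have hab : g 0 * g 1 = q⁻¹ • (g 1 * g 0) := by
    simpa only [g, gen, map_mul, map_smul] using rel LinkedRel.ab
  have hac : g 0 * g 2 = q⁻¹ • (g 2 * g 0) := by
    simpa only [g, gen, map_mul, map_smul] using rel LinkedRel.ac
  have hbd : g 1 * g 3 = q⁻¹ • (g 3 * g 1) := by
    simpa only [g, gen, map_mul, map_smul] using rel LinkedRel.bd
  have hcd : g 2 * g 3 = q⁻¹ • (g 3 * g 2) := by
    simpa only [g, gen, map_mul, map_smul] using rel LinkedRel.cd
  have hbc : g 1 * g 2 = g 2 * g 1 := by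
    simpa only [g, gen, map_mul] using rel LinkedRel.bc
  have had : g 0 * g 3 - g 3 * g 0 = (q⁻¹ - q) • (g 1 * g 2) := by
    simpa only [g, gen, map_sub, map_mul, map_smul] using rel LinkedRel.ad
  have hab' : g 4 * g 5 = q' • (g 5 * g 4) := by
    simpa only [g, gen, map_mul, map_smul] using rel LinkedRel.ab'
  have hac' : g 4 * g 6 = q' • (g 6 * g 4) := by
    simpa only [g, gen, map_mul, map_smul] using rel LinkedRel.ac'
  have hbd' : g 5 * g 7 = q' • (g 7 * g 5) := by
    simpa only [g, gen, map_mul, map_smul] using rel LinkedRel.bd'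
  have hcd' : g 6 * g 7 = q' • (g 7 * g 6) := by
    simpa only [g, gen, map_mul, map_smul] using rel LinkedRel.cd'
  have hbc' : g 5 * g 6 = g 6 * g 5 := by
    simpa only [g, gen, map_mul] using rel LinkedRel.bc'
  have had' : g 4 * g 7 - g 7 * g 4 = (q' - q'⁻¹) • (g 5 * g 6) := by
    simpa only [g, gen, map_sub, map_mul, map_smul] using rel LinkedRel.ad'
  have l1 : g 5 * g 0 = ℓ • (g 0 * g 5) := by
    simpa only [g, gen, map_mul, map_smul] using rel LinkedRel.link₁
  have l2 : g 0 * g 6 = ℓ • (g 6 * g 0) := by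
    simpa only [g, gen, map_mul, map_smul] using rel LinkedRel.link₂
  have l3 : g 4 * g 1 = ℓ • (g 1 * g 4) := by
    simpa only [g, gen, map_mul, map_smul] using rel LinkedRel.link₃
  have l4 : g 1 * g 7 = ℓ • (g 7 * g 1) := by
    simpa only [g, gen, map_mul, map_smul] using rel LinkedRel.link₄
  have l5 : g 2 * g 4 = ℓ • (g 4 * g 2) := by
    simpa only [g, gen, map_mul, map_smul] using rel LinkedRel.link₅
  have l6 : g 7 * g 2 = ℓ • (g 2 * g 7) := by
    simpa only [g, gen, map_mul, map_smul] using rel LinkedRel.link₆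
  have l7 : g 3 * g 5 = ℓ • (g 5 * g 3) := by
    simpa only [g, gen, map_mul, map_smul] using rel LinkedRel.link₇
  have l8 : g 6 * g 3 = ℓ • (g 3 * g 6) := by
    simpa only [g, gen, map_mul, map_smul] using rel LinkedRel.link₈
  have m1 : g 0 * g 4 = g 4 * g 0 := by simpa only [g, gen, map_mul] using rel LinkedRel.comm₁
  have m2 : g 0 * g 7 = g 7 * g 0 := by simpa only [g, gen, map_mul] using rel LinkedRel.comm₂
  have m3 : g 1 * g 5 = g 5 * g 1 := by simpa only [g, gen, map_mul] using rel LinkedRel.comm₃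
  have m4 : g 1 * g 6 = g 6 * g 1 := by simpa only [g, gen, map_mul] using rel LinkedRel.comm₄
  have m5 : g 2 * g 5 = g 5 * g 2 := by simpa only [g, gen, map_mul] using rel LinkedRel.comm₅
  have m6 : g 2 * g 6 = g 6 * g 2 := by simpa only [g, gen, map_mul] using rel LinkedRel.comm₆
  have m7 : g 3 * g 4 = g 4 * g 3 := by simpa only [g, gen, map_mul] using rel LinkedRel.comm₇
  have m8 : g 3 * g 7 = g 7 * g 3 := by simpa only [g, gen, map_mul] using rel LinkedRel.comm₈
  have one_s : ∀ x y : Atilde q q' ℓ, x * y = y * x → x * y = (1 : ℂ) • (y * x) :=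
    fun x y h => by rw [one_smul]; exact h
  -- centrality of Det within the chiral sector
  obtain ⟨cA, cB, cC, cD⟩ := manin_central q hq (g 0) (g 1) (g 2) (g 3) hab hac hbd hcd hbc had
  -- centrality of Det' within the antichiral sector (Manin with parameter q'⁻¹)
  obtain ⟨cA', cB', cC', cD'⟩ := manin_central q'⁻¹ (inv_ne_zero hq') (g 4) (g 5) (g 6) (g 7)
    (by rw [inv_inv]; exact hab') (by rw [inv_inv]; exact hac')
    (by rw [inv_inv]; exact hbd') (by rw [inv_inv]; exact hcd') hbc'
    (by rw [inv_inv]; exact had')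
  simp only [inv_inv] at cA' cB' cC' cD'
  -- Det commutes with the antichiral generators
  have x4 : Det * g 4 = g 4 * Det :=
    cross_central (g 0) (g 1) (g 2) (g 3) (g 4) q⁻¹ 1 ℓ⁻¹ ℓ 1 (one_mul 1)
      (inv_mul_cancel₀ hℓ) (one_s _ _ m1) (inv_swap hℓ l3) l5 (one_s _ _ m7)
  have x5 : Det * g 5 = g 5 * Det :=
    cross_central (g 0) (g 1) (g 2) (g 3) (g 5) q⁻¹ ℓ⁻¹ 1 1 ℓ (inv_mul_cancel₀ hℓ)
      (one_mul 1) (inv_swap hℓ l1) (one_s _ _ m3) (one_s _ _ m5) l7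
  have x6 : Det * g 6 = g 6 * Det :=
    cross_central (g 0) (g 1) (g 2) (g 3) (g 6) q⁻¹ ℓ 1 1 ℓ⁻¹ (mul_inv_cancel₀ hℓ)
      (one_mul 1) l2 (one_s _ _ m4) (one_s _ _ m6) (inv_swap hℓ l8)
  have x7 : Det * g 7 = g 7 * Det :=
    cross_central (g 0) (g 1) (g 2) (g 3) (g 7) q⁻¹ 1 ℓ ℓ⁻¹ 1 (one_mul 1)
      (mul_inv_cancel₀ hℓ) (one_s _ _ m2) l4 (inv_swap hℓ l6) (one_s _ _ m8)
  -- Det' commutes with the chiral generators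
  have y0 : Det' * g 0 = g 0 * Det' :=
    cross_central (g 4) (g 5) (g 6) (g 7) (g 0) q' 1 ℓ ℓ⁻¹ 1 (one_mul 1)
      (mul_inv_cancel₀ hℓ) (one_s _ _ m1.symm) l1 (inv_swap hℓ l2) (one_s _ _ m2.symm)
  have y1 : Det' * g 1 = g 1 * Det' :=
    cross_central (g 4) (g 5) (g 6) (g 7) (g 1) q' ℓ 1 1 ℓ⁻¹ (mul_inv_cancel₀ hℓ)
      (one_mul 1) l3 (one_s _ _ m3.symm) (one_s _ _ m4.symm) (inv_swap hℓ l4)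
  have y2 : Det' * g 2 = g 2 * Det' :=
    cross_central (g 4) (g 5) (g 6) (g 7) (g 2) q' ℓ⁻¹ 1 1 ℓ (inv_mul_cancel₀ hℓ)
      (one_mul 1) (inv_swap hℓ l5) (one_s _ _ m5.symm) (one_s _ _ m6.symm) l6
  have y3 : Det' * g 3 = g 3 * Det' :=
    cross_central (g 4) (g 5) (g 6) (g 7) (g 3) q' 1 ℓ⁻¹ ℓ 1 (one_mul 1)
      (inv_mul_cancel₀ hℓ) (one_s _ _ m7.symm) (inv_swap hℓ l7) l8 (one_s _ _ m8.symm)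
  refine ⟨?_, ?_, ?_⟩
  · intro i
    fin_cases i
    · exact cA
    · exact cB
    · exact cC
    · exact cD
    · exact x4
    · exact x5
    · exact x6
    · exact x7
  · intro i
    fin_cases i
    · exact y0
    · exact y1
    · exact y2
    · exact y3
    · exact cA'
    · exact cB'
    · exact cC'
    · exact cD'
  · show Det * (g 4 * g 7 - q' • (g 5 * g 6)) = (g 4 * g 7 - q' • (g 5 * g 6)) * Det
    calc Det * (g 4 * g 7 - q' • (g 5 * g 6))
        = Det * g 4 * g 7 - q' • (Det * g 5 * g 6) := by
          rw [mul_sub, mul_smul_comm, mul_assoc, mul_assoc]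
      _ = g 4 * Det * g 7 - q' • (g 5 * Det * g 6) := by rw [x4, x5]
      _ = g 4 * (g 7 * Det) - q' • (g 5 * (g 6 * Det)) := by
          rw [mul_assoc, mul_assoc, x7, x6]
      _ = (g 4 * g 7 - q' • (g 5 * g 6)) * Det := by
          rw [sub_mul, smul_mul_assoc, mul_assoc, mul_assoc]
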